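/- arXiv:1406.5685 — 5 statements merged into one kernel-verified Lean document; each statement's English description precedes it below -/
import Mathlib

section
/- Let ν ≥ 1 and h₀,…,h_ν ∈ ℂ with h₀ ≠ 0 and h_ν ≠ 0, let H(ω) = ∑_{ℓ=0}^{ν} h_ℓ e^{-iℓω} satisfy H(ω) ≠ 0 for every ω ∈ [-π,π], let N₀ > 0 and θ ∈ ℝ, and define the waterfilling spectrum S_p(ω) = max(0, θ − N₀/|H(ω)|²). Assume S_p is not identically zero on [-π,π]. If there exist an integer m ≥ 0 and complex constants c_{-m},…,c_m such that S_p(ω)·|H(ω)|² = ∑_{ℓ=-m}^{m} c_ℓ e^{iℓω} for every ω ∈ [-π,π] (i.e., the combined transmit-filter–channel power spectrum is a trigonometric polynomial of degree m, so that the combined memory is ν_C = m), then m ≥ ν. -/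
open scoped BigOperators

/-- Channel frequency response `H(ω) = ∑_{ℓ=0}^{ν} h_ℓ e^{-iℓω}`. -/
noncomputable def freqResp (ν : ℕ) (h : ℕ → ℂ) (ω : ℝ) : ℂ :=
  ∑ ℓ ∈ Finset.range (ν + 1), h ℓ * Complex.exp (-(Complex.I * ℓ * ω))

section Aux

open Polynomial Complex

lemma wf_exp_injOn (s t : ℝ) (h1 : t - s ≤ 1) :
    Set.InjOn (fun ω : ℝ => Complex.exp (Complex.I * ω)) (Set.Icc s t) := by
  intro x hx y hy hxy
  simp only [] at hxy
  have h2 : Complex.exp (Complex.I * x - Complex.I * y) = 1 := by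
    rw [Complex.exp_sub, hxy, div_self (Complex.exp_ne_zero _)]
  rw [Complex.exp_eq_one_iff] at h2
  obtain ⟨n, hn⟩ := h2
  have h3 : Complex.I * x - Complex.I * y = Complex.I * ((x : ℂ) - y) := by ring
  rw [h3] at hn
  have hxyr : ((x : ℂ) - y) = n * (2 * Real.pi) := by
    have hI : (Complex.I : ℂ) ≠ 0 := Complex.I_ne_zero
    have hn' : Complex.I * ((x : ℂ) - y) = Complex.I * (n * (2 * Real.pi)) := by
      rw [hn]; ring
    exact mul_left_cancel₀ hI hn'
  have hre : (x : ℝ) - y = n * (2 * Real.pi) := by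
    have := congrArg Complex.re hxyr
    push_cast at this
    simpa using this
  have hb : |x - y| ≤ 1 := by
    rw [abs_le]; constructor <;> nlinarith [hx.1, hx.2, hy.1, hy.2]
  have hn0 : n = 0 := by
    by_contra hne
    have h1n : (1:ℝ) ≤ |(n:ℝ)| := by
      have : 1 ≤ |n| := Int.one_le_abs hne
      exact_mod_cast this
    have hpi : (3:ℝ) < Real.pi := Real.pi_gt_three
    rw [hre, abs_mul] at hb
    have habs : |(2 * Real.pi)| = 2 * Real.pi := abs_of_pos (by positivity)
    rw [habs] at hb
    nlinarith [abs_nonneg ((n:ℝ))]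
  rw [hn0] at hre
  push_cast at hre
  linarith

lemma wf_poly_zero_of_eval_exp (R : Polynomial ℂ) (s t : ℝ) (hst : s < t)
    (hz : ∀ ω ∈ Set.Icc s t, R.eval (Complex.exp (Complex.I * ω)) = 0) : R = 0 := by
  set u := min t (s + 1) with hu
  have hsu : s < u := lt_min hst (by linarith)
  have hsub : Set.Icc s u ⊆ Set.Icc s t := Set.Icc_subset_Icc le_rfl (min_le_left _ _)
  apply Polynomial.eq_zero_of_infinite_isRoot
  have hinj : Set.InjOn (fun ω : ℝ => Complex.exp (Complex.I * ω)) (Set.Icc s u) :=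
    wf_exp_injOn s u (by have := min_le_right t (s+1); simp only [hu]; linarith)
  have hinf : ((fun ω : ℝ => Complex.exp (Complex.I * ω)) '' (Set.Icc s u)).Infinite :=
    (Set.Icc_infinite hsu).image hinj
  apply hinf.mono
  rintro z ⟨ω, hω, rfl⟩
  exact hz ω (hsub hω)

noncomputable def polyA (ν : ℕ) (h : ℕ → ℂ) : Polynomial ℂ :=
  ∑ k ∈ Finset.range (ν + 1), Polynomial.C (h k) * Polynomial.X ^ (ν - k)

noncomputable def polyB (ν : ℕ) (h : ℕ → ℂ) : Polynomial ℂ :=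
  ∑ k ∈ Finset.range (ν + 1), Polynomial.C ((starRingEnd ℂ) (h k)) * Polynomial.X ^ k

noncomputable def polyQ (m : ℕ) (c : ℤ → ℂ) : Polynomial ℂ :=
  ∑ ℓ ∈ Finset.Icc (-(m : ℤ)) (m : ℤ), Polynomial.C (c ℓ) * Polynomial.X ^ (ℓ + m).toNat

lemma evalA (ν : ℕ) (h : ℕ → ℂ) (ω : ℝ) :
    (polyA ν h).eval (Complex.exp (Complex.I * ω)) =
      Complex.exp (Complex.I * ν * ω) * freqResp ν h ω := by
  unfold polyA freqResp
  rw [Polynomial.eval_finset_sum, Finset.mul_sum]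
  apply Finset.sum_congr rfl
  intro k hk
  have hkν : k ≤ ν := Nat.lt_succ_iff.mp (Finset.mem_range.mp hk)
  simp only [Polynomial.eval_mul, Polynomial.eval_C, Polynomial.eval_pow, Polynomial.eval_X]
  rw [← Complex.exp_nat_mul]
  have hc : ((ν - k : ℕ) : ℂ) = (ν : ℂ) - k := by
    push_cast [Nat.cast_sub hkν]; ring
  have hsplit : Complex.exp (((ν - k : ℕ) : ℂ) * (Complex.I * ω)) =
      Complex.exp (Complex.I * ν * ω) * Complex.exp (-(Complex.I * k * ω)) := by
    rw [← Complex.exp_add]; congr 1; rw [hc]; ring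
  rw [hsplit]; ring

lemma evalB (ν : ℕ) (h : ℕ → ℂ) (ω : ℝ) :
    (polyB ν h).eval (Complex.exp (Complex.I * ω)) = (starRingEnd ℂ) (freqResp ν h ω) := by
  unfold polyB freqResp
  rw [Polynomial.eval_finset_sum, map_sum]
  apply Finset.sum_congr rfl
  intro k _
  simp only [Polynomial.eval_mul, Polynomial.eval_C, Polynomial.eval_pow, Polynomial.eval_X,
    map_mul]
  congr 1
  rw [← Complex.exp_conj, ← Complex.exp_nat_mul]
  congr 1
  simp [Complex.conj_ofReal]
  ring

lemma evalQ (m : ℕ) (c : ℤ → ℂ) (ω : ℝ) :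
    (polyQ m c).eval (Complex.exp (Complex.I * ω)) =
      Complex.exp (Complex.I * m * ω) *
        ∑ ℓ ∈ Finset.Icc (-(m : ℤ)) (m : ℤ), c ℓ * Complex.exp (Complex.I * ℓ * ω) := by
  unfold polyQ
  rw [Polynomial.eval_finset_sum, Finset.mul_sum]
  apply Finset.sum_congr rfl
  intro ℓ hℓ
  obtain ⟨h1, h2⟩ := Finset.mem_Icc.mp hℓ
  have hnn : (0:ℤ) ≤ ℓ + m := by linarith
  simp only [Polynomial.eval_mul, Polynomial.eval_C, Polynomial.eval_pow, Polynomial.eval_X]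
  rw [← Complex.exp_nat_mul]
  have hcast : (((ℓ + (m:ℤ)).toNat : ℕ) : ℂ) = (ℓ : ℂ) + m := by
    have h3 := Int.toNat_of_nonneg hnn
    have h4 : (((ℓ + (m:ℤ)).toNat : ℕ) : ℤ) = ℓ + m := h3
    exact_mod_cast congrArg (fun z : ℤ => (z : ℂ)) h4
  have hsplit : Complex.exp ((((ℓ + (m:ℤ)).toNat : ℕ) : ℂ) * (Complex.I * ω)) =
      Complex.exp (Complex.I * m * ω) * Complex.exp (Complex.I * ℓ * ω) := by
    rw [← Complex.exp_add]; congr 1; rw [hcast]; ring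
  rw [hsplit]; ring

lemma coeffA (ν : ℕ) (h : ℕ → ℂ) : (polyA ν h).coeff ν = h 0 := by
  unfold polyA
  rw [Polynomial.finset_sum_coeff]
  rw [Finset.sum_eq_single 0]
  · simp
  · intro k hk hk0
    have hkν : k ≤ ν := Nat.lt_succ_iff.mp (Finset.mem_range.mp hk)
    simp only [Polynomial.coeff_C_mul, Polynomial.coeff_X_pow]
    rw [if_neg (by omega)]
    simp
  · intro habs; simp at habs

lemma degA (ν : ℕ) (h : ℕ → ℂ) : (polyA ν h).natDegree ≤ ν := by
  unfold polyA
  apply Polynomial.natDegree_sum_le_of_forall_le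
  intro k hk
  apply (Polynomial.natDegree_C_mul_le _ _).trans
  rw [Polynomial.natDegree_X_pow]
  omega

lemma coeffB (ν : ℕ) (h : ℕ → ℂ) : (polyB ν h).coeff ν = (starRingEnd ℂ) (h ν) := by
  unfold polyB
  rw [Polynomial.finset_sum_coeff]
  rw [Finset.sum_eq_single ν]
  · simp
  · intro k hk hk0
    simp only [Polynomial.coeff_C_mul, Polynomial.coeff_X_pow]
    rw [if_neg (by omega)]
    simp
  · intro habs; simp at habs

lemma degB (ν : ℕ) (h : ℕ → ℂ) : (polyB ν h).natDegree ≤ ν := by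
  unfold polyB
  apply Polynomial.natDegree_sum_le_of_forall_le
  intro k hk
  apply (Polynomial.natDegree_C_mul_le _ _).trans
  rw [Polynomial.natDegree_X_pow]
  exact Nat.lt_succ_iff.mp (Finset.mem_range.mp hk)

lemma degQ (m : ℕ) (c : ℤ → ℂ) : (polyQ m c).natDegree ≤ 2 * m := by
  unfold polyQ
  apply Polynomial.natDegree_sum_le_of_forall_le
  intro ℓ hℓ
  obtain ⟨h1, h2⟩ := Finset.mem_Icc.mp hℓ
  apply (Polynomial.natDegree_C_mul_le _ _).trans
  rw [Polynomial.natDegree_X_pow]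
  omega

lemma freqResp_continuous (ν : ℕ) (h : ℕ → ℂ) :
    Continuous (fun ω : ℝ => Complex.normSq (freqResp ν h ω)) := by
  apply Complex.continuous_normSq.comp
  unfold freqResp
  apply continuous_finset_sum
  intro ℓ _
  exact continuous_const.mul (Complex.continuous_exp.comp
    ((continuous_const.mul Complex.continuous_ofReal).neg))

end Aux

/-- If the waterfilling spectrum `S_p(ω) = max(0, θ − N₀/|H(ω)|²)`
is not identically zero and the combined power spectrum `S_p(ω)|H(ω)|²` is a
trigonometric polynomial of degree `m` (combined memory `ν_C = m`), then `m ≥ ν`. -/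
theorem waterfilling_memory_ge
    (ν : ℕ) (hν : 1 ≤ ν) (h : ℕ → ℂ) (h0 : h 0 ≠ 0) (hnu : h ν ≠ 0)
    (hH : ∀ ω ∈ Set.Icc (-Real.pi) Real.pi, freqResp ν h ω ≠ 0)
    (N₀ : ℝ) (hN₀ : 0 < N₀) (θ : ℝ)
    (Sp : ℝ → ℝ)
    (hSp : ∀ ω : ℝ, Sp ω = max 0 (θ - N₀ / Complex.normSq (freqResp ν h ω)))
    (hSpne : ∃ ω ∈ Set.Icc (-Real.pi) Real.pi, Sp ω ≠ 0)
    (m : ℕ) (c : ℤ → ℂ)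
    (hpoly : ∀ ω ∈ Set.Icc (-Real.pi) Real.pi,
      ((Sp ω * Complex.normSq (freqResp ν h ω) : ℝ) : ℂ) =
        ∑ ℓ ∈ Finset.Icc (-(m : ℤ)) (m : ℤ), c ℓ * Complex.exp (Complex.I * ℓ * ω)) :
    ν ≤ m := by
  by_contra hcon
  push_neg at hcon
  have hpi : (3:ℝ) < Real.pi := Real.pi_gt_three
  have hnsq : ∀ ω ∈ Set.Icc (-Real.pi) Real.pi, 0 < Complex.normSq (freqResp ν h ω) :=
    fun ω hω => Complex.normSq_pos.mpr (hH ω hω)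
  obtain ⟨ω₁, hω₁, hSp1⟩ := hSpne
  have hSp1pos : 0 < Sp ω₁ := by
    rcases lt_or_eq_of_le (le_max_left 0 (θ - N₀ / Complex.normSq (freqResp ν h ω₁))) with hl | he
    · rw [hSp]; exact hl
    · exact absurd ((hSp ω₁).trans he.symm) hSp1
  have hθpos : 0 < θ := by
    have h1 : 0 < θ - N₀ / Complex.normSq (freqResp ν h ω₁) := by
      by_contra hle
      push_neg at hle
      have : Sp ω₁ = 0 := by rw [hSp]; exact max_eq_left hle
      exact hSp1 this
    have h2 : 0 < N₀ / Complex.normSq (freqResp ν h ω₁) := div_pos hN₀ (hnsq ω₁ hω₁)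
    linarith
  by_cases hA : ∀ ω ∈ Set.Icc (-Real.pi) Real.pi, N₀ ≤ θ * Complex.normSq (freqResp ν h ω)
  · -- Case A : the spectrum is everywhere above water level
    have key : ∀ ω ∈ Set.Icc (-Real.pi) Real.pi,
        ((Sp ω * Complex.normSq (freqResp ν h ω) : ℝ) : ℂ) =
          (θ:ℂ) * ((Complex.normSq (freqResp ν h ω) : ℝ) : ℂ) - (N₀:ℂ) := by
      intro ω hω
      have hpos := hnsq ω hω
      have hge : N₀ / Complex.normSq (freqResp ν h ω) ≤ θ :=
        (div_le_iff₀ hpos).mpr (by linarith [hA ω hω])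
      have hSpω : Sp ω = θ - N₀ / Complex.normSq (freqResp ν h ω) := by
        rw [hSp]; exact max_eq_right (by linarith)
      have hre : Sp ω * Complex.normSq (freqResp ν h ω) =
          θ * Complex.normSq (freqResp ν h ω) - N₀ := by
        rw [hSpω, sub_mul, div_mul_cancel₀ _ (ne_of_gt hpos)]
      rw [hre]; push_cast; ring
    set R : Polynomial ℂ :=
      Polynomial.C (θ:ℂ) * (polyA ν h * polyB ν h) * Polynomial.X ^ m
        - Polynomial.C (N₀:ℂ) * Polynomial.X ^ (ν + m)
        - polyQ m c * Polynomial.X ^ ν with hRdef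
    have hRz : ∀ ω ∈ Set.Icc (0:ℝ) 1, R.eval (Complex.exp (Complex.I * ω)) = 0 := by
      intro ω hω
      have hωI : ω ∈ Set.Icc (-Real.pi) Real.pi := by
        constructor <;> [linarith [hω.1]; linarith [hω.2]]
      have hsum : (∑ ℓ ∈ Finset.Icc (-(m : ℤ)) (m : ℤ),
          c ℓ * Complex.exp (Complex.I * ℓ * ω)) =
          (θ:ℂ) * ((Complex.normSq (freqResp ν h ω) : ℝ) : ℂ) - (N₀:ℂ) := by
        rw [← hpoly ω hωI]; exact key ω hωI
      simp only [hRdef, Polynomial.eval_sub, Polynomial.eval_mul, Polynomial.eval_pow,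
        Polynomial.eval_C, Polynomial.eval_X]
      rw [evalA, evalB, evalQ, hsum]
      rw [← Complex.exp_nat_mul, ← Complex.exp_nat_mul, ← Complex.exp_nat_mul]
      have hmc : Complex.mul_conj (freqResp ν h ω) = _ := rfl
      rw [mul_assoc (Complex.exp (Complex.I * ν * ω)), Complex.mul_conj]
      have e1 : Complex.exp (((ν + m : ℕ) : ℂ) * (Complex.I * ω)) =
          Complex.exp (((ν:ℕ) : ℂ) * (Complex.I * ω)) *
            Complex.exp (((m:ℕ) : ℂ) * (Complex.I * ω)) := by
        rw [← Complex.exp_add]; push_cast; ring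
      have e2 : Complex.exp (Complex.I * ν * ω) =
          Complex.exp (((ν:ℕ) : ℂ) * (Complex.I * ω)) := by congr 1; ring
      have e3 : Complex.exp (Complex.I * m * ω) =
          Complex.exp (((m:ℕ) : ℂ) * (Complex.I * ω)) := by congr 1; ring
      rw [e1, e2, e3]
      ring
    have hR0 : R = 0 := wf_poly_zero_of_eval_exp R 0 1 one_pos hRz
    -- coefficient of X^(2ν+m)
    have hdA : (polyA ν h).natDegree = ν :=
      le_antisymm (degA ν h)
        (Polynomial.le_natDegree_of_ne_zero (by rw [coeffA]; exact h0))
    have hconj : (starRingEnd ℂ) (h ν) ≠ 0 := by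
      simpa using hnu
    have hdB : (polyB ν h).natDegree = ν :=
      le_antisymm (degB ν h)
        (Polynomial.le_natDegree_of_ne_zero (by rw [coeffB]; exact hconj))
    have hc1 : (Polynomial.C (θ:ℂ) * (polyA ν h * polyB ν h) * Polynomial.X ^ m).coeff
        (2 * ν + m) = (θ:ℂ) * (h 0 * (starRingEnd ℂ) (h ν)) := by
      rw [Polynomial.coeff_mul_X_pow, Polynomial.coeff_C_mul]
      congr 1
      have : 2 * ν = (polyA ν h).natDegree + (polyB ν h).natDegree := by
        rw [hdA, hdB]; ring
      rw [this, Polynomial.coeff_mul_degree_add_degree]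
      rw [Polynomial.leadingCoeff, Polynomial.leadingCoeff, hdA, hdB, coeffA, coeffB]
    have hc2 : (Polynomial.C (N₀:ℂ) * Polynomial.X ^ (ν + m)).coeff (2 * ν + m) = 0 := by
      rw [Polynomial.coeff_C_mul, Polynomial.coeff_X_pow, if_neg (by omega)]
      ring
    have hc3 : (polyQ m c * Polynomial.X ^ ν).coeff (2 * ν + m) = 0 := by
      have : 2 * ν + m = (ν + m) + ν := by ring
      rw [this, Polynomial.coeff_mul_X_pow]
      apply Polynomial.coeff_eq_zero_of_natDegree_lt
      have := degQ m c
      omega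
    have := congrArg (fun p : Polynomial ℂ => p.coeff (2 * ν + m)) hR0
    simp only [hRdef, Polynomial.coeff_sub, Polynomial.coeff_zero] at this
    rw [hc1, hc2, hc3] at this
    have hne : (θ:ℂ) * (h 0 * (starRingEnd ℂ) (h ν)) ≠ 0 := by
      apply mul_ne_zero
      · exact_mod_cast ne_of_gt hθpos
      · exact mul_ne_zero h0 hconj
    simp at this
    rcases this with h1 | h2 | h3
    · exact absurd h1 (ne_of_gt hθpos)
    · exact h0 h2
    · exact hnu h3
  · -- Case B : water level dips below the noise curve somewhere
    push_neg at hA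
    obtain ⟨ω₀, hω₀, hlt⟩ := hA
    have hg : Continuous (fun ω : ℝ => θ * Complex.normSq (freqResp ν h ω) - N₀) :=
      (continuous_const.mul (freqResp_continuous ν h)).sub continuous_const
    have hUopen : IsOpen {ω : ℝ | θ * Complex.normSq (freqResp ν h ω) - N₀ < 0} :=
      isOpen_lt hg continuous_const
    have hω₀U : ω₀ ∈ {ω : ℝ | θ * Complex.normSq (freqResp ν h ω) - N₀ < 0} := by
      simp only [Set.mem_setOf_eq]; linarith
    obtain ⟨δ, hδpos, hball⟩ := Metric.isOpen_iff.mp hUopen ω₀ hω₀U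
    set s := max (-Real.pi) (ω₀ - δ/2) with hsdef
    set t := min Real.pi (ω₀ + δ/2) with htdef
    have hst : s < t := by
      rw [hsdef, htdef]
      apply max_lt <;> [apply lt_min; apply lt_min] <;>
        first
          | linarith
          | linarith [hω₀.1, hω₀.2]
    have hRz : ∀ ω ∈ Set.Icc s t,
        (polyQ m c * Polynomial.X ^ ν).eval (Complex.exp (Complex.I * ω)) = 0 := by
      intro ω hω
      have hωI : ω ∈ Set.Icc (-Real.pi) Real.pi := by
        constructor
        · exact le_trans (le_max_left _ _) hω.1
        · exact le_trans hω.2 (min_le_left _ _)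
      have hωball : ω ∈ Metric.ball ω₀ δ := by
        rw [Metric.mem_ball, Real.dist_eq, abs_lt]
        have h1 : ω₀ - δ/2 ≤ ω := le_trans (le_max_right _ _) hω.1
        have h2 : ω ≤ ω₀ + δ/2 := le_trans hω.2 (min_le_right _ _)
        constructor <;> linarith
      have hgω : θ * Complex.normSq (freqResp ν h ω) - N₀ < 0 := hball hωball
      have hpos := hnsq ω hωI
      have hSpω : Sp ω = 0 := by
        rw [hSp]
        apply max_eq_left
        have : θ < N₀ / Complex.normSq (freqResp ν h ω) := (lt_div_iff₀ hpos).mpr (by linarith)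
        linarith
      have hsum : (∑ ℓ ∈ Finset.Icc (-(m : ℤ)) (m : ℤ),
          c ℓ * Complex.exp (Complex.I * ℓ * ω)) = 0 := by
        rw [← hpoly ω hωI, hSpω]
        simp
      simp only [Polynomial.eval_mul, Polynomial.eval_pow, Polynomial.eval_X]
      rw [evalQ, hsum]
      ring
    have hQ0 : polyQ m c * Polynomial.X ^ ν = 0 :=
      wf_poly_zero_of_eval_exp _ s t hst hRz
    have heval := congrArg (Polynomial.eval (Complex.exp (Complex.I * ω₁))) hQ0
    simp only [Polynomial.eval_mul, Polynomial.eval_pow, Polynomial.eval_X,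
      Polynomial.eval_zero] at heval
    rw [evalQ] at heval
    rw [← hpoly ω₁ hω₁] at heval
    have hexp1 : Complex.exp (Complex.I * m * ω₁) ≠ 0 := Complex.exp_ne_zero _
    have hexp2 : Complex.exp (Complex.I * ω₁) ^ ν ≠ 0 := pow_ne_zero _ (Complex.exp_ne_zero _)
    have hzero : ((Sp ω₁ * Complex.normSq (freqResp ν h ω₁) : ℝ) : ℂ) = 0 := by
      rcases mul_eq_zero.mp heval with hl | hr
      · rcases mul_eq_zero.mp hl with h1 | h2
        · exact absurd h1 hexp1
        · exact h2
      · exact absurd hr hexp2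
    have : Sp ω₁ * Complex.normSq (freqResp ν h ω₁) = 0 := by exact_mod_cast hzero
    have := mul_eq_zero.mp this
    rcases this with h1 | h2
    · exact hSp1 h1
    · exact absurd h2 (ne_of_gt (hnsq ω₁ hω₁))
end

section
/- Let K ≥ 1 and let C be a K×K Hermitian positive definite complex matrix. Then for every invertible K×K complex matrix U, log det(U†U) − Tr(U C U†) ≤ −log det(C) − K, with equality if and only if U†U = C⁻¹. (Here det(U†U) = |det U|² and Tr(U C U†) are positive reals, so both sides are real.) -/
open Matrix
open scoped BigOperators ComplexOrder

lemma posdef_conj_aux {K : ℕ} {A B : Matrix (Fin K) (Fin K) ℂ}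
    (hA : A.PosDef) (hB : IsUnit B.det) : (Bᴴ * A * B).PosDef := by
  refine PosDef.of_dotProduct_mulVec_pos (isHermitian_conjTranspose_mul_mul B hA.1) fun x hx => ?_
  have hinj : Function.Injective (B.mulVec) :=
    mulVec_injective_iff_isUnit.2 ((Matrix.isUnit_iff_isUnit_det _).2 hB)
  have hBx : B *ᵥ x ≠ 0 := fun h => hx (hinj (by simpa using h))
  simpa only [star_mulVec, dotProduct_mulVec, vecMul_vecMul] using hA.dotProduct_mulVec_pos hBx

lemma trace_re_eq_sum_eigenvalues {K : ℕ} {B : Matrix (Fin K) (Fin K) ℂ}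
    (hB : B.IsHermitian) : (Matrix.trace B).re = ∑ i, hB.eigenvalues i := by
  have h1 : Matrix.trace B = ∑ i, (hB.eigenvalues i : ℂ) := by
    conv_lhs => rw [hB.spectral_theorem, Unitary.conjStarAlgAut_apply]
    rw [trace_mul_comm, ← mul_assoc]
    have : (star (hB.eigenvectorUnitary : Matrix (Fin K) (Fin K) ℂ)) *
        (hB.eigenvectorUnitary : Matrix (Fin K) (Fin K) ℂ) = 1 := by
      simpa using unitary.coe_star_mul_self hB.eigenvectorUnitary
    rw [this, one_mul, trace_diagonal]
    rfl
  rw [h1, Complex.re_sum]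
  simp

lemma core_ineq (K : ℕ) (B : Matrix (Fin K) (Fin K) ℂ) (hB : B.PosDef) :
    (Real.log B.det.re - (Matrix.trace B).re ≤ -K) ∧
      (Real.log B.det.re - (Matrix.trace B).re = -(K : ℝ) ↔ B = 1) := by
  set μ : Fin K → ℝ := hB.1.eigenvalues with hμ
  have hpos : ∀ i, 0 < μ i := fun i => hB.eigenvalues_pos i
  have hdet : B.det.re = ∏ i, μ i := by
    have : B.det = ((∏ i, μ i : ℝ) : ℂ) := by
      rw [hB.1.det_eq_prod_eigenvalues, Complex.ofReal_prod]; rfl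
    rw [this, Complex.ofReal_re]
  have htr : (Matrix.trace B).re = ∑ i, μ i := trace_re_eq_sum_eigenvalues hB.1
  have hlog : Real.log B.det.re = ∑ i, Real.log (μ i) := by
    rw [hdet, Real.log_prod (fun i _ => (hpos i).ne')]
  have hkey : Real.log B.det.re - (Matrix.trace B).re
      = ∑ i, (Real.log (μ i) - μ i) := by
    rw [hlog, htr, Finset.sum_sub_distrib]
  have hle : ∀ i ∈ Finset.univ, Real.log (μ i) - μ i ≤ -1 := fun i _ => by
    have := Real.log_le_sub_one_of_pos (hpos i); linarith
  have hsum_le : ∑ i, (Real.log (μ i) - μ i) ≤ ∑ _i : Fin K, (-1 : ℝ) :=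
    Finset.sum_le_sum hle
  have hconst : ∑ _i : Fin K, (-1 : ℝ) = -(K : ℝ) := by simp
  constructor
  · rw [hkey]; rw [hconst] at hsum_le; exact hsum_le
  constructor
  · intro h
    have heach : ∀ i ∈ Finset.univ, Real.log (μ i) - μ i = -1 := by
      rw [← Finset.sum_eq_sum_iff_of_le hle]
      rw [hkey] at h; rw [hconst, ← h]
    have hμ1 : ∀ i, μ i = 1 := by
      intro i
      by_contra hne
      have := Real.log_lt_sub_one_of_pos (hpos i) hne
      have := heach i (Finset.mem_univ i)
      linarith
    have hdiag : Matrix.diagonal (RCLike.ofReal ∘ μ) = (1 : Matrix (Fin K) (Fin K) ℂ) := by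
      have hfun : (RCLike.ofReal ∘ μ : Fin K → ℂ) = fun _ => 1 :=
        funext fun i => by simp [hμ1 i]
      rw [hfun]
      exact diagonal_one
    calc B = (hB.1.eigenvectorUnitary : Matrix (Fin K) (Fin K) ℂ) *
          Matrix.diagonal (RCLike.ofReal ∘ μ) *
          (star (hB.1.eigenvectorUnitary : Matrix (Fin K) (Fin K) ℂ)) := hB.1.spectral_theorem.trans (Unitary.conjStarAlgAut_apply _ _)
      _ = 1 := by
          rw [hdiag, mul_one]
          simpa using unitary.coe_mul_star_self hB.1.eigenvectorUnitary
  · intro h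
    subst h
    have h1 : (1 : Matrix (Fin K) (Fin K) ℂ).det = 1 := det_one
    have h2 : Matrix.trace (1 : Matrix (Fin K) (Fin K) ℂ) = (K : ℂ) := by
      rw [trace_one]; simp
    rw [h1, h2]
    simp

/-- For a Hermitian positive definite `C` and any invertible `U`,
`log det(U†U) − Tr(UCU†) ≤ −log det(C) − K`, with equality iff `U†U = C⁻¹`. -/
theorem logdet_trace_inequality
    (K : ℕ) (hK : 1 ≤ K)
    (C : Matrix (Fin K) (Fin K) ℂ) (hC : C.PosDef)
    (U : Matrix (Fin K) (Fin K) ℂ) (hU : IsUnit U.det) :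
    (Real.log ((Uᴴ * U).det.re) - (Matrix.trace (U * C * Uᴴ)).re ≤
      -Real.log (C.det.re) - K) ∧
    (Real.log ((Uᴴ * U).det.re) - (Matrix.trace (U * C * Uᴴ)).re =
        -Real.log (C.det.re) - K ↔ Uᴴ * U = C⁻¹) := by
  classical
  set M : Matrix (Fin K) (Fin K) ℂ := Uᴴ * U with hM
  have hMpd : M.PosDef := by
    have : M = Uᴴ * 1 * U := by rw [mul_one]
    rw [this]
    exact posdef_conj_aux Matrix.PosDef.one hU
  set S : Matrix (Fin K) (Fin K) ℂ := (open scoped MatrixOrder in CFC.sqrt C) with hSdef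
  have hSherm : S.IsHermitian := (open scoped MatrixOrder in (CFC.sqrt_nonneg C).posSemidef.1)
  have hSS : S * S = C := (open scoped MatrixOrder in CFC.sqrt_mul_sqrt_self C hC.posSemidef.nonneg)
  have hSunit : IsUnit S.det := by
    have : S.det * S.det = C.det := by rw [← det_mul, hSS]
    have hCdet : C.det ≠ 0 := ne_of_gt hC.det_pos
    exact isUnit_iff_ne_zero.2 (fun h => hCdet (by rw [← this, h, zero_mul]))
  set B : Matrix (Fin K) (Fin K) ℂ := S * M * S with hBdef
  have hBpd : B.PosDef := by
    have : B = Sᴴ * M * S := by rw [hSherm.eq]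
    rw [this]
    exact posdef_conj_aux hMpd hSunit
  -- determinant relation
  have hdetB : B.det = C.det * M.det := by
    rw [hBdef, det_mul, det_mul, mul_comm, ← mul_assoc, ← det_mul, hSS, mul_comm]
  have hCim : C.det.im = 0 := by
    have := hC.det_pos
    rw [Complex.lt_def] at this
    exact this.2.symm
  have hMim : M.det.im = 0 := by
    have := hMpd.det_pos
    rw [Complex.lt_def] at this
    exact this.2.symm
  have hdetBre : B.det.re = C.det.re * M.det.re := by
    rw [hdetB, Complex.mul_re, hCim, hMim]; ring
  -- trace relation
  have htrB : Matrix.trace B = Matrix.trace (U * C * Uᴴ) := by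
    rw [hBdef, trace_mul_comm, ← mul_assoc, ← mul_assoc, hSS]
    rw [show U * C * Uᴴ = (U * C) * Uᴴ from rfl, trace_mul_comm, ← mul_assoc]
  have hCre : 0 < C.det.re := by
    have := hC.det_pos
    rw [Complex.lt_def] at this
    simpa using this.1
  have hMre : 0 < M.det.re := by
    have := hMpd.det_pos
    rw [Complex.lt_def] at this
    simpa using this.1
  have hlogB : Real.log B.det.re = Real.log C.det.re + Real.log M.det.re := by
    rw [hdetBre]
    exact Real.log_mul (ne_of_gt hCre) (ne_of_gt hMre)
  have core := core_ineq K B hBpd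
  have hEq : Real.log ((Uᴴ * U).det.re) - (Matrix.trace (U * C * Uᴴ)).re
      = (Real.log B.det.re - (Matrix.trace B).re) - Real.log C.det.re := by
    rw [hlogB, htrB, ← hM]; ring
  have hB1 : B = 1 ↔ Uᴴ * U = C⁻¹ := by
    rw [← hM]
    constructor
    · intro h
      have h2 : S⁻¹ * (S * M * S) * S⁻¹ = S⁻¹ * 1 * S⁻¹ := by rw [← hBdef, h]
      have h3 : S⁻¹ * (S * M * S) * S⁻¹ = M := by
        rw [show S⁻¹ * (S * M * S) * S⁻¹ = (S⁻¹ * S) * M * (S * S⁻¹) by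
          simp only [mul_assoc]]
        rw [Matrix.nonsing_inv_mul _ hSunit, Matrix.mul_nonsing_inv _ hSunit,
          one_mul, mul_one]
      rw [h3] at h2
      rw [h2, mul_one, ← Matrix.mul_inv_rev, hSS]
    · intro h
      rw [hBdef, h, ← hSS, Matrix.mul_inv_rev,
        show S * (S⁻¹ * S⁻¹) * S = (S * S⁻¹) * (S⁻¹ * S) by simp only [mul_assoc],
        Matrix.mul_nonsing_inv _ hSunit, Matrix.nonsing_inv_mul _ hSunit, one_mul]
  constructor
  · rw [hEq]
    have := core.1
    linarith
  · rw [hEq, ← hB1, ← core.2]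
    constructor <;> intro h <;> linarith
end

section
/- Let n ≥ 1, let A be an n×n Hermitian positive definite complex matrix, and let d ∈ ℂⁿ. Then ∫_{ℂⁿ} exp( 2·Re(d† c) − c† A c ) dc = (πⁿ / det A) · exp( d† A⁻¹ d ), where the integral is with respect to Lebesgue measure on ℂⁿ identified with ℝ^{2n} (note that d†A⁻¹d is a nonnegative real and det A a positive real, so both sides are positive reals). -/
open Matrix MeasureTheory
open scoped BigOperators ComplexOrder

noncomputable section
namespace CGIAux
open Real




/-- 1-D Gaussian with linear term. -/
lemma gauss_one {b : ℝ} (hb : 0 < b) (a : ℝ) :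
    ∫ x : ℝ, Real.exp (-b * x ^ 2 + a * x)
      = Real.sqrt (Real.pi / b) * Real.exp (a ^ 2 / (4 * b)) := by
  have h : ∀ x : ℝ, -b * x ^ 2 + a * x
      = a ^ 2 / (4 * b) + (-b * (x - a / (2 * b)) ^ 2) := by
    intro x
    field_simp
    ring
  simp_rw [h, Real.exp_add, MeasureTheory.integral_const_mul]
  rw [integral_sub_right_eq_self (fun x => Real.exp (-b * x ^ 2)) (a / (2 * b)),
    integral_gaussian, mul_comm]

def Phi (n : ℕ) : (Fin n → ℂ) ≃ᵐ (Fin n ⊕ Fin n → ℝ) :=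
  (MeasurableEquiv.piCongrRight fun _ : Fin n => Complex.measurableEquivRealProd).trans
    ((MeasurableEquiv.arrowProdEquivProdArrow ℝ ℝ (Fin n)).trans
      (MeasurableEquiv.sumPiEquivProdPi fun _ : Fin n ⊕ Fin n => ℝ).symm)

lemma Phi_apply_inl {n : ℕ} (c : Fin n → ℂ) (i : Fin n) :
    Phi n c (Sum.inl i) = (c i).re := rfl

lemma Phi_apply_inr {n : ℕ} (c : Fin n → ℂ) (i : Fin n) :
    Phi n c (Sum.inr i) = (c i).im := rfl

lemma measurePreserving_Phi (n : ℕ) : MeasurePreserving (Phi n) volume volume := by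
  have h1 : MeasurePreserving
      (fun (c : Fin n → ℂ) (i : Fin n) => Complex.measurableEquivRealProd (c i))
      volume volume :=
    volume_preserving_pi fun _ => Complex.volume_preserving_equiv_real_prod
  have h2 := volume_measurePreserving_arrowProdEquivProdArrow ℝ ℝ (Fin n)
  have h3 := volume_measurePreserving_sumPiEquivProdPi_symm (fun _ : Fin n ⊕ Fin n => ℝ)
  exact (h3.comp (h2.comp h1))

/-- realification of a complex matrix -/
def reM {n : ℕ} (U : Matrix (Fin n) (Fin n) ℂ) :
    Matrix (Fin n ⊕ Fin n) (Fin n ⊕ Fin n) ℝ :=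
  Matrix.fromBlocks (Matrix.of fun a b => (U a b).re) (Matrix.of fun a b => -(U a b).im)
    (Matrix.of fun a b => (U a b).im) (Matrix.of fun a b => (U a b).re)

lemma reM_mulVec {n : ℕ} (U : Matrix (Fin n) (Fin n) ℂ) (c : Fin n → ℂ) :
    (reM U).mulVec (Phi n c) = Phi n (U.mulVec c) := by
  funext j
  cases j with
  | inl i =>
      rw [Phi_apply_inl]
      simp only [mulVec, dotProduct, Fintype.sum_sum_type, reM, fromBlocks_apply₁₁,
        fromBlocks_apply₁₂, of_apply, Phi_apply_inl, Phi_apply_inr, Complex.re_sum,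
        Complex.mul_re]
      rw [← Finset.sum_add_distrib]
      exact Finset.sum_congr rfl (by intros; ring)
  | inr i =>
      rw [Phi_apply_inr]
      simp only [mulVec, dotProduct, Fintype.sum_sum_type, reM, fromBlocks_apply₂₁,
        fromBlocks_apply₂₂, of_apply, Phi_apply_inl, Phi_apply_inr, Complex.im_sum,
        Complex.mul_im]
      rw [← Finset.sum_add_distrib]
      exact Finset.sum_congr rfl (by intros; ring)

lemma reM_orthogonal {n : ℕ} {U : Matrix (Fin n) (Fin n) ℂ}
    (hU : star U * U = 1) : (reM U)ᵀ * reM U = 1 := by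
  have key : ∀ a b : Fin n, (∑ i, (starRingEnd ℂ) (U i a) * U i b) = if a = b then 1 else 0 := by
    intro a b
    have := congrFun (congrFun (congrArg (fun M => (M : Matrix (Fin n) (Fin n) ℂ)) hU) a) b
    simpa [Matrix.mul_apply, Matrix.one_apply, Matrix.star_apply] using this
  have keyre : ∀ a b : Fin n,
      (∑ i, ((U i a).re * (U i b).re + (U i a).im * (U i b).im)) = if a = b then 1 else 0 := by
    intro a b
    have h := congrArg Complex.re (key a b)
    simpa [Complex.re_sum, Complex.mul_re, apply_ite Complex.re] using h
  have keyim : ∀ a b : Fin n,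
      (∑ i, ((U i a).re * (U i b).im + -((U i a).im * (U i b).re))) = 0 := by
    intro a b
    have h := congrArg Complex.im (key a b)
    simpa [Complex.im_sum, Complex.mul_im, apply_ite Complex.im] using h
  ext j k
  rw [Matrix.mul_apply]
  cases j with
  | inl a =>
      cases k with
      | inl b =>
          simp only [transpose_apply, Fintype.sum_sum_type, reM, fromBlocks_apply₁₁,
            fromBlocks_apply₁₂, fromBlocks_apply₂₁, fromBlocks_apply₂₂, of_apply]
          rw [← Finset.sum_add_distrib, Finset.sum_congr rfl
            (fun x _ => by ring :
              ∀ x ∈ Finset.univ, (U x a).re * (U x b).re + (U x a).im * (U x b).im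
                = (U x a).re * (U x b).re + (U x a).im * (U x b).im), keyre a b]
          simp [Matrix.one_apply]
      | inr b =>
          simp only [transpose_apply, Fintype.sum_sum_type, reM, fromBlocks_apply₁₁,
            fromBlocks_apply₁₂, fromBlocks_apply₂₁, fromBlocks_apply₂₂, of_apply]
          rw [← Finset.sum_add_distrib, Finset.sum_congr rfl
            (fun x _ => by ring :
              ∀ x ∈ Finset.univ, (U x a).re * -(U x b).im + (U x a).im * (U x b).re
                = -((U x a).re * (U x b).im + -((U x a).im * (U x b).re))),
            Finset.sum_neg_distrib, keyim a b, neg_zero]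
          simp [Matrix.one_apply]
  | inr a =>
      cases k with
      | inl b =>
          simp only [transpose_apply, Fintype.sum_sum_type, reM, fromBlocks_apply₁₁,
            fromBlocks_apply₁₂, fromBlocks_apply₂₁, fromBlocks_apply₂₂, of_apply]
          rw [← Finset.sum_add_distrib, Finset.sum_congr rfl
            (fun x _ => by ring :
              ∀ x ∈ Finset.univ, -(U x a).im * (U x b).re + (U x a).re * (U x b).im
                = (U x a).re * (U x b).im + -((U x a).im * (U x b).re)), keyim a b]
          simp [Matrix.one_apply]
      | inr b =>
          simp only [transpose_apply, Fintype.sum_sum_type, reM, fromBlocks_apply₁₁,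
            fromBlocks_apply₁₂, fromBlocks_apply₂₁, fromBlocks_apply₂₂, of_apply]
          rw [← Finset.sum_add_distrib, Finset.sum_congr rfl
            (fun x _ => by ring :
              ∀ x ∈ Finset.univ, -(U x a).im * -(U x b).im + (U x a).re * (U x b).re
                = (U x a).re * (U x b).re + (U x a).im * (U x b).im), keyre a b]
          simp [Matrix.one_apply]



lemma measurePreserving_mulVec_real {ι : Type*} [Fintype ι] [DecidableEq ι]
    (M : Matrix ι ι ℝ) (h : Mᵀ * M = 1) :
    MeasurePreserving (fun v : ι → ℝ => M.mulVec v) volume volume := by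
  have hdet2 : M.det * M.det = 1 := by
    have := congrArg Matrix.det h
    rwa [Matrix.det_mul, Matrix.det_transpose, Matrix.det_one] at this
  have hdet : M.det ≠ 0 := by
    intro h0
    rw [h0, mul_zero] at hdet2
    exact zero_ne_one hdet2
  have habs : |M.det| = 1 := by
    have : |M.det| * |M.det| = 1 := by rw [← abs_mul, hdet2, abs_one]
    nlinarith [abs_nonneg M.det]
  have hldet : LinearMap.det (Matrix.toLin' M) = M.det := LinearMap.det_toLin' M
  have hmap : Measure.map (Matrix.toLin' M) volume = volume := by
    rw [Real.map_linearMap_volume_pi_eq_smul_volume_pi (by rw [hldet]; exact hdet)]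
    rw [hldet, abs_inv, habs]
    simp
  have hfun : (fun v : ι → ℝ => M.mulVec v) = ⇑(Matrix.toLin' M) := by
    funext v; rw [Matrix.toLin'_apply]
  refine ⟨?_, ?_⟩
  · rw [hfun]
    exact (LinearMap.continuous_on_pi _).measurable
  · rw [hfun] at *
    exact hmap

lemma measurePreserving_mulVec_unitary {n : ℕ} (U : Matrix (Fin n) (Fin n) ℂ)
    (hU : star U * U = 1) :
    MeasurePreserving (fun c : Fin n → ℂ => U.mulVec c) volume volume := by
  have hM := measurePreserving_mulVec_real (reM U) (reM_orthogonal hU)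
  have hPhi := measurePreserving_Phi n
  have hPhiSymm := hPhi.symm (Phi n)
  have hcomp : (fun c : Fin n → ℂ => U.mulVec c)
      = (Phi n).symm ∘ (fun v => (reM U).mulVec v) ∘ (Phi n) := by
    funext c
    simp only [Function.comp_apply, reM_mulVec]
    rw [MeasurableEquiv.symm_apply_apply]
  rw [hcomp]
  exact hPhiSymm.comp (hM.comp hPhi)



lemma dot_rotate {n : ℕ} (U : Matrix (Fin n) (Fin n) ℂ) (d w : Fin n → ℂ) :
    star d ⬝ᵥ (U *ᵥ w) = star ((star U) *ᵥ d) ⬝ᵥ w := by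
  rw [Matrix.star_mulVec, Matrix.star_eq_conjTranspose,
    Matrix.conjTranspose_conjTranspose, ← Matrix.dotProduct_mulVec]

lemma quad_rotate {n : ℕ} (U A : Matrix (Fin n) (Fin n) ℂ) (c : Fin n → ℂ) :
    star (U *ᵥ c) ⬝ᵥ (A *ᵥ (U *ᵥ c)) = star c ⬝ᵥ ((star U * A * U) *ᵥ c) := by
  rw [Matrix.star_mulVec, ← Matrix.dotProduct_mulVec, Matrix.mulVec_mulVec,
    Matrix.mulVec_mulVec, Matrix.star_eq_conjTranspose, mul_assoc]

end CGIAux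
end

open Matrix MeasureTheory
open scoped BigOperators ComplexOrder

/-- Complex Gaussian integral: for Hermitian positive definite `A`
and `d ∈ ℂⁿ`, `∫_{ℂⁿ} exp(2Re(d†c) − c†Ac) dc = (πⁿ/det A)·exp(d†A⁻¹d)`. -/
theorem complex_gaussian_integral
    (n : ℕ) (hn : 1 ≤ n)
    (A : Matrix (Fin n) (Fin n) ℂ) (hA : A.PosDef) (d : Fin n → ℂ) :
    (∫ c : Fin n → ℂ,
        Real.exp (2 * ((star d) ⬝ᵥ c).re - ((star c) ⬝ᵥ A.mulVec c).re)) =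
      Real.pi ^ n / A.det.re * Real.exp (((star d) ⬝ᵥ A⁻¹.mulVec d).re) := by
  classical
  open CGIAux Real in
  have hH : A.IsHermitian := hA.1
  set lam : Fin n → ℝ := hH.eigenvalues with hlamdef
  have hlam : ∀ i, 0 < lam i := fun i => hA.eigenvalues_pos i
  have hlamne : ∀ i, lam i ≠ 0 := fun i => (hlam i).ne'
  set U : Matrix (Fin n) (Fin n) ℂ := ↑(hH.eigenvectorUnitary) with hUdef
  have hU2 : U * star U = 1 := (Matrix.mem_unitaryGroup_iff).mp (hH.eigenvectorUnitary).2
  have hU1 : star U * U = 1 := (Matrix.mem_unitaryGroup_iff').mp (hH.eigenvectorUnitary).2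
  have hdiag : star U * A * U = Matrix.diagonal (fun i => (lam i : ℂ)) := by
    have h := hH.conjStarAlgAut_star_eigenvectorUnitary
    simp at h
    rw [hUdef, hlamdef, h]
    rfl
  have hspec : A = U * Matrix.diagonal (fun i => (lam i : ℂ)) * star U := by
    have hconj : U * (star U * A * U) * star U = A := by
      calc U * (star U * A * U) * star U
          = (U * star U) * A * (U * star U) := by noncomm_ring
        _ = A := by rw [hU2, Matrix.one_mul, Matrix.mul_one]
    rw [← hconj, hdiag]
  set e : Fin n → ℂ := (star U) *ᵥ d with hedef
  -- rotation is measure preserving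
  have hrotmeas : Measurable (fun c : Fin n → ℂ => U *ᵥ c) := by
    have h1 : Continuous (Matrix.mulVecLin U) := LinearMap.continuous_of_finiteDimensional _
    exact h1.measurable
  have hrotmeas' : Measurable (fun c : Fin n → ℂ => (star U) *ᵥ c) := by
    have h1 : Continuous (Matrix.mulVecLin (star U)) := LinearMap.continuous_of_finiteDimensional _
    exact h1.measurable
  let rotE : (Fin n → ℂ) ≃ᵐ (Fin n → ℂ) :=
    { toFun := fun c => U *ᵥ c
      invFun := fun c => (star U) *ᵥ c
      left_inv := fun c => by simp [Matrix.mulVec_mulVec, hU1]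
      right_inv := fun c => by simp [Matrix.mulVec_mulVec, hU2]
      measurable_toFun := hrotmeas
      measurable_invFun := hrotmeas' }
  have hrotMP : MeasurePreserving (fun c : Fin n → ℂ => U *ᵥ c) volume volume :=
    measurePreserving_mulVec_unitary U hU1
  -- real/imag coefficient vectors
  set b : Fin n ⊕ Fin n → ℝ := Sum.elim lam lam with hbdef
  set a : Fin n ⊕ Fin n → ℝ := Sum.elim (fun i => 2 * (e i).re) (fun i => 2 * (e i).im)
    with hadef
  have hbpos : ∀ j, 0 < b j := by
    intro j
    cases j with
    | inl i => simpa [hbdef] using hlam i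
    | inr i => simpa [hbdef] using hlam i
  have hco_re : ∀ (v : Fin n ⊕ Fin n → ℝ) (i : Fin n),
      ((Phi n).symm v i).re = v (Sum.inl i) := by
    intro v i
    rw [← Phi_apply_inl ((Phi n).symm v) i, MeasurableEquiv.apply_symm_apply]
  have hco_im : ∀ (v : Fin n ⊕ Fin n → ℝ) (i : Fin n),
      ((Phi n).symm v i).im = v (Sum.inr i) := by
    intro v i
    rw [← Phi_apply_inr ((Phi n).symm v) i, MeasurableEquiv.apply_symm_apply]
  -- Step 1 : rotate
  have step1 :
      (∫ c : Fin n → ℂ,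
          Real.exp (2 * ((star d) ⬝ᵥ c).re - ((star c) ⬝ᵥ A.mulVec c).re))
        = ∫ c : Fin n → ℂ,
            Real.exp (2 * ((star e) ⬝ᵥ c).re
              - ((star c) ⬝ᵥ (Matrix.diagonal (fun i => (lam i : ℂ))) *ᵥ c).re) := by
    rw [← hrotMP.integral_comp rotE.measurableEmbedding
      (fun c => Real.exp (2 * ((star d) ⬝ᵥ c).re - ((star c) ⬝ᵥ A.mulVec c).re))]
    congr 1
    funext c
    rw [show A.mulVec (U *ᵥ c) = A *ᵥ (U *ᵥ c) from rfl]
    rw [quad_rotate, hdiag, dot_rotate, ← hedef]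
  -- Step 2 : real coordinates
  have step2 :
      (∫ c : Fin n → ℂ,
          Real.exp (2 * ((star e) ⬝ᵥ c).re
            - ((star c) ⬝ᵥ (Matrix.diagonal (fun i => (lam i : ℂ))) *ᵥ c).re))
        = ∫ v : Fin n ⊕ Fin n → ℝ, Real.exp (∑ j, (-b j * v j ^ 2 + a j * v j)) := by
    rw [← ((measurePreserving_Phi n).symm (Phi n)).integral_comp
      ((Phi n).symm.measurableEmbedding)
      (fun c => Real.exp (2 * ((star e) ⬝ᵥ c).re
        - ((star c) ⬝ᵥ (Matrix.diagonal (fun i => (lam i : ℂ))) *ᵥ c).re))]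
    congr 1
    funext v
    congr 1
    rw [Fintype.sum_sum_type]
    simp only [hadef, hbdef, Sum.elim_inl, Sum.elim_inr]
    rw [← Finset.sum_add_distrib]
    simp only [dotProduct, Pi.star_apply, Matrix.mulVec_diagonal, Complex.re_sum,
      Complex.mul_re, Complex.mul_im, Complex.star_def, Complex.conj_re, Complex.conj_im,
      Complex.ofReal_re, Complex.ofReal_im, hco_re, hco_im]
    rw [Finset.mul_sum, ← Finset.sum_sub_distrib]
    exact Finset.sum_congr rfl (fun i _ => by ring)
  -- Step 3 : product of 1-D Gaussians
  have step3 :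
      (∫ v : Fin n ⊕ Fin n → ℝ, Real.exp (∑ j, (-b j * v j ^ 2 + a j * v j)))
        = ∏ j, (Real.sqrt (Real.pi / b j) * Real.exp (a j ^ 2 / (4 * b j))) := by
    simp_rw [Real.exp_sum]
    rw [MeasureTheory.volume_pi, MeasureTheory.integral_fintype_prod_eq_prod
      (fun j (x : ℝ) => Real.exp (-b j * x ^ 2 + a j * x))]
    exact Finset.prod_congr rfl (fun j _ => gauss_one (hbpos j) (a j))
  -- determinant
  have hdet : A.det.re = ∏ i, lam i := by
    have h1 : A.det = ((∏ i, lam i : ℝ) : ℂ) := by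
      rw [hH.det_eq_prod_eigenvalues, ← hlamdef, Complex.ofReal_prod]
      norm_cast
    rw [h1, Complex.ofReal_re]
  -- inverse
  have hAinv : A⁻¹ = U * Matrix.diagonal (fun i => ((lam i : ℂ))⁻¹) * star U := by
    apply Matrix.inv_eq_right_inv
    calc A * (U * Matrix.diagonal (fun i => ((lam i : ℂ))⁻¹) * star U)
        = U * (Matrix.diagonal (fun i => (lam i : ℂ))
            * ((star U * U) * Matrix.diagonal (fun i => ((lam i : ℂ))⁻¹))) * star U := by
          rw [hspec]; noncomm_ring
      _ = 1 := by
          rw [hU1, Matrix.one_mul, Matrix.diagonal_mul_diagonal]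
          have : (fun i => (lam i : ℂ) * ((lam i : ℂ))⁻¹) = fun _ => (1 : ℂ) := by
            funext i
            rw [mul_inv_cancel₀]
            exact_mod_cast Complex.ofReal_ne_zero.mpr (hlamne i)
          rw [this, Matrix.diagonal_one, Matrix.mul_one, hU2]
  have hquad : ((star d) ⬝ᵥ A⁻¹.mulVec d).re
      = ∑ i, (lam i)⁻¹ * ((e i).re ^ 2 + (e i).im ^ 2) := by
    rw [show A⁻¹.mulVec d = A⁻¹ *ᵥ d from rfl, hAinv,
      ← Matrix.mulVec_mulVec, ← Matrix.mulVec_mulVec, dot_rotate, ← hedef]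
    simp only [dotProduct, Pi.star_apply, Matrix.mulVec_diagonal, Complex.re_sum,
      Complex.mul_re, Complex.mul_im, Complex.star_def, Complex.conj_re, Complex.conj_im,
      Complex.ofReal_re, Complex.ofReal_im, Complex.inv_re, Complex.inv_im,
      Complex.normSq_ofReal]
    refine Finset.sum_congr rfl (fun i _ => ?_)
    have h0 : (lam i : ℝ) * lam i ≠ 0 := mul_ne_zero (hlamne i) (hlamne i)
    field_simp [hlamne i]
    ring
  -- final algebra
  rw [step1, step2, step3]
  rw [Finset.prod_mul_distrib]
  have hprod1 : (∏ j, Real.sqrt (Real.pi / b j)) = Real.pi ^ n / A.det.re := by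
    rw [Fintype.prod_sum_type]
    simp only [hbdef, Sum.elim_inl, Sum.elim_inr]
    rw [← Finset.prod_mul_distrib]
    have h1 : ∀ i ∈ Finset.univ, Real.sqrt (Real.pi / lam i) * Real.sqrt (Real.pi / lam i)
        = Real.pi / lam i := by
      intro i _
      exact Real.mul_self_sqrt (div_nonneg Real.pi_pos.le (hlam i).le)
    rw [Finset.prod_congr rfl h1, Finset.prod_div_distrib, Finset.prod_const, hdet]
    simp
  have hprod2 : (∏ j, Real.exp (a j ^ 2 / (4 * b j)))
      = Real.exp (((star d) ⬝ᵥ A⁻¹.mulVec d).re) := by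
    rw [← Real.exp_sum, hquad, Fintype.sum_sum_type]
    simp only [hadef, hbdef, Sum.elim_inl, Sum.elim_inr]
    rw [← Finset.sum_add_distrib]
    congr 1
    refine Finset.sum_congr rfl (fun i _ => ?_)
    field_simp
    ring
  rw [hprod1, hprod2]
end

section
/- Let X and S be finite nonempty sets, let N ≥ 1, and for k = 0,…,N−1 let Λ_k : X × S × S → ℝ≥0 (branch metrics) and P_k : X → ℝ≥0 (priors). For c = (c₀,…,c_{N−1}) ∈ X^N and σ = (σ₀,…,σ_N) ∈ S^{N+1}, define the trellis weight W(c,σ) = ∏_{k=0}^{N−1} Λ_k(c_k, σ_k, σ_{k+1}) · P_k(c_k). Define the forward messages by α₀(s) = 1 for all s ∈ S and α_{k+1}(s') = ∑_{c∈X} ∑_{s∈S} α_k(s) Λ_k(c, s, s') P_k(c), and the backward messages by β_N(s) = 1 for all s ∈ S and β_k(s) = ∑_{c∈X} ∑_{s'∈S} β_{k+1}(s') Λ_k(c, s, s') P_k(c). Then for every k ∈ {0,…,N−1} and every x ∈ X, the BCJR completion formula computes the exact marginal: P_k(x) · ∑_{s∈S} ∑_{s'∈S} α_k(s) Λ_k(x,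 s, s') β_{k+1}(s') = ∑_{c ∈ X^N with c_k = x} ∑_{σ ∈ S^{N+1}} W(c,σ). -/
open scoped BigOperators NNReal

theorem sum_pi_cons {γ M : Type} [Fintype γ] [AddCommMonoid M] {n : ℕ} (g : (Fin (n+1) → γ) → M) :
    ∑ f : Fin (n+1) → γ, g f = ∑ y : γ, ∑ f : Fin n → γ, g (Fin.cons y f) := by
  rw [← Equiv.sum_comp (Fin.consEquiv (fun _ => γ)) g, Fintype.sum_prod_type]
  rfl

theorem sum_pi_snoc {γ M : Type} [Fintype γ] [AddCommMonoid M] {n : ℕ} (g : (Fin (n+1) → γ) → M) :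
    ∑ f : Fin (n+1) → γ, g f = ∑ y : γ, ∑ f : Fin n → γ, g (Fin.snoc f y) := by
  rw [← Equiv.sum_comp (Fin.snocEquiv (fun _ => γ)) g, Fintype.sum_prod_type]
  rfl

theorem snoc_zero' {γ : Type} {n : ℕ} (f : Fin (n+1) → γ) (y : γ) :
    (Fin.snoc f y : Fin (n+2) → γ) 0 = f 0 := by
  rw [show (0 : Fin (n+2)) = Fin.castSucc 0 from rfl, Fin.snoc_castSucc]


theorem prod_snoc_body {X S : Type} [Fintype X] [Fintype S] {n : ℕ}
    (Λ : Fin (n+1) → X → S → S → ℝ≥0) (P : Fin (n+1) → X → ℝ≥0)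
    (c' : Fin n → X) (cN : X) (σ' : Fin (n+1) → S) (sN : S) :
    (∏ q : Fin (n+1), Λ q ((Fin.snoc c' cN : Fin (n+1) → X) q)
        ((Fin.snoc σ' sN : Fin (n+2) → S) q.castSucc)
        ((Fin.snoc σ' sN : Fin (n+2) → S) q.succ)
        * P q ((Fin.snoc c' cN : Fin (n+1) → X) q))
      = (∏ q : Fin n, Λ q.castSucc (c' q) (σ' q.castSucc) (σ' q.succ) * P q.castSucc (c' q))
        * (Λ (Fin.last n) cN (σ' (Fin.last n)) sN * P (Fin.last n) cN) := by
  rw [Fin.prod_univ_castSucc]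
  simp [Fin.succ_castSucc, Fin.snoc_castSucc, Fin.snoc_last, Fin.succ_last, - Fin.castSucc_succ]

theorem bcjr_aux (X S : Type) [Fintype X] [Fintype S] [DecidableEq X] :
    ∀ (N : ℕ) (Λ : Fin N → X → S → S → ℝ≥0) (P : Fin N → X → ℝ≥0)
      (α β : ℕ → S → ℝ≥0),
      (∀ (k : Fin N) (s' : S), α (k + 1) s' = ∑ c : X, ∑ s : S, α k s * Λ k c s s' * P k c) →
      (∀ (k : Fin N) (s : S), β k s = ∑ c : X, ∑ s' : S, β (k + 1) s' * Λ k c s s' * P k c) →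
      ∀ (k : Fin N) (x : X),
      P k x * ∑ s : S, ∑ s' : S, α k s * Λ k x s s' * β (k + 1) s' =
        ∑ c : Fin N → X, (if c k = x then
          ∑ σ : Fin (N + 1) → S,
            α 0 (σ 0) * (∏ j : Fin N, Λ j (c j) (σ j.castSucc) (σ j.succ) * P j (c j))
              * β N (σ (Fin.last N)) else 0) := by
  intro N
  induction N with
  | zero => exact fun _ _ _ _ _ _ k => k.elim0
  | succ n IH =>
    intro Λ P α β hα hβ k x
    rcases Fin.eq_zero_or_eq_succ k with rfl | ⟨j, rfl⟩
    · -- k = 0 : peel the last transition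
      cases n with
      | zero =>
        -- direct computation for N = 1
        simp only [sum_pi_cons]
        simp only [Fin.cons_succ, Fin.cons_zero, Fin.prod_univ_succ, Fin.castSucc_zero,
          ← Fin.succ_last, Fin.last_zero, Fin.prod_univ_zero, mul_one]
        simp only [Fintype.sum_unique]
        rw [Finset.sum_ite_eq' Finset.univ x]
        simp only [Finset.mem_univ, if_true, Fin.val_zero, zero_add]
        simp only [Finset.mul_sum]
        refine Finset.sum_congr rfl fun s _ => ?_
        refine Finset.sum_congr rfl fun s' _ => ?_
        ring
      | succ m =>
        have hα' : ∀ (k : Fin (m+1)) (s' : S),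
            α (k + 1) s' = ∑ c : X, ∑ s : S,
              α k s * Λ k.castSucc c s s' * P k.castSucc c := by
          intro k s'
          simpa using hα k.castSucc s'
        have hβ' : ∀ (k : Fin (m+1)) (s : S),
            β k s = ∑ c : X, ∑ s' : S,
              β (k + 1) s' * Λ k.castSucc c s s' * P k.castSucc c := by
          intro k s
          simpa using hβ k.castSucc s
        have key := IH (fun q => Λ q.castSucc) (fun q => P q.castSucc) α β hα' hβ' 0 x
        have hβlast : ∀ s : S, β (m + 1) s =
            ∑ c : X, ∑ s' : S, β (m + 2) s' * Λ (Fin.last (m+1)) c s s' * P (Fin.last (m+1)) c := by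
          intro s
          simpa using hβ (Fin.last (m+1))  s
        simp only [Fin.castSucc_zero, Fin.val_zero, zero_add] at key ⊢
        rw [sum_pi_snoc]
        simp only [sum_pi_snoc (n := m+2)]
        simp only [prod_snoc_body Λ P, Fin.snoc_last, snoc_zero']
        rw [key]
        simp only [hβlast]
        conv_rhs => rw [Finset.sum_comm]
        refine Finset.sum_congr rfl fun c' _ => ?_
        by_cases h : c' 0 = x
        · simp only [h, eq_self_iff_true, if_true]
          simp only [Finset.mul_sum]
          rw [Finset.sum_comm]
          refine Finset.sum_congr rfl fun cN _ => ?_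
          rw [Finset.sum_comm]
          refine Finset.sum_congr rfl fun sN _ => ?_
          refine Finset.sum_congr rfl fun σ' _ => ?_
          ring
        · simp [h]
    · -- k = j.succ : peel the first transition
      have hα' : ∀ (m : Fin n) (s' : S),
          α (m + 1 + 1) s' = ∑ c : X, ∑ s : S,
            α (m + 1) s * Λ m.succ c s s' * P m.succ c := by
        intro m s'
        simpa [Fin.val_succ] using hα m.succ s'
      have hβ' : ∀ (m : Fin n) (s : S),
          β (m + 1) s = ∑ c : X, ∑ s' : S,
            β (m + 1 + 1) s' * Λ m.succ c s s' * P m.succ c := by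
        intro m s
        simpa [Fin.val_succ] using hβ m.succ s
      have key := IH (fun m => Λ m.succ) (fun m => P m.succ)
        (fun m => α (m + 1)) (fun m => β (m + 1)) hα' hβ' j x
      have hα1 : ∀ s' : S, α 1 s' = ∑ c : X, ∑ s : S, α 0 s * Λ 0 c s s' * P 0 c := by
        simpa using hα 0
      simp only [zero_add, hα1] at key
      simp only [Fin.val_succ]
      rw [key]
      rw [sum_pi_cons]
      simp only [sum_pi_cons (n := n+1)]
      simp only [Fin.cons_succ, Fin.cons_zero, Fin.prod_univ_succ, Fin.castSucc_zero,
        ← Fin.succ_castSucc, ← Fin.succ_last]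
      conv_rhs => rw [Finset.sum_comm]
      refine Finset.sum_congr rfl fun c' _ => ?_
      by_cases h : c' j = x
      · simp only [h, eq_self_iff_true, if_true]
        simp only [Finset.sum_mul, Finset.mul_sum]
        rw [Finset.sum_comm]
        refine Finset.sum_congr rfl fun c0 _ => ?_
        rw [Finset.sum_comm]
        refine Finset.sum_congr rfl fun s _ => ?_
        refine Finset.sum_congr rfl fun σ' _ => ?_
        ring
      · simp [h]

/-- Correctness of the BCJR completion step: the forward/backward
messages combine to compute the exact marginal of the trellis weight. -/
theorem bcjr_completion_exact
    (X S : Type) [Fintype X] [Fintype S] [DecidableEq X]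
    [Nonempty X] [Nonempty S]
    (N : ℕ) (hN : 1 ≤ N)
    (Λ : Fin N → X → S → S → ℝ≥0) (P : Fin N → X → ℝ≥0)
    (α β : ℕ → S → ℝ≥0)
    (hα0 : ∀ s : S, α 0 s = 1)
    (hαrec : ∀ (k : Fin N) (s' : S),
      α (k + 1) s' = ∑ c : X, ∑ s : S, α k s * Λ k c s s' * P k c)
    (hβN : ∀ s : S, β N s = 1)
    (hβrec : ∀ (k : Fin N) (s : S),
      β k s = ∑ c : X, ∑ s' : S, β (k + 1) s' * Λ k c s s' * P k c) :
    ∀ (k : Fin N) (x : X),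
      P k x * ∑ s : S, ∑ s' : S, α k s * Λ k x s s' * β (k + 1) s' =
        ∑ c ∈ Finset.univ.filter (fun c : Fin N → X => c k = x),
          ∑ σ : Fin (N + 1) → S,
            ∏ j : Fin N, Λ j (c j) (σ j.castSucc) (σ j.succ) * P j (c j) := by
  intro k x
  rw [Finset.sum_filter, bcjr_aux X S N Λ P α β hαrec hβrec k x]
  simp [hα0, hβN]
end

section
/- Let f : ℝ → ℝ be continuous, 2π-periodic, and satisfy f(ω) > 0 for every ω, and define its Fourier coefficients b_i = (1/2π)∫_{-π}^{π} f(ω) e^{iωi} dω ∈ ℂ for i ∈ ℤ. Then for every integer L ≥ 1, the L×L Toeplitz matrix B with entries (B)_{jk} = b_{k−j} is Hermitian and positive definite (in particular invertible). -/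
open Matrix
open scoped BigOperators ComplexOrder

/-- `L×L` Toeplitz matrix with entries `(B)_{jk} = b_{k-j}`. -/
noncomputable def toeplitz (L : ℕ) (b : ℤ → ℂ) : Matrix (Fin L) (Fin L) ℂ :=
  fun j k => b ((k : ℤ) - (j : ℤ))

-- orthogonality
private lemma orth_exp (n : ℤ) :
    (∫ ω in (-Real.pi)..Real.pi, Complex.exp (Complex.I * n * ω)) =
      if n = 0 then (2 * Real.pi : ℂ) else 0 := by
  rcases eq_or_ne n 0 with h | h
  · subst h
    simp only [Int.cast_zero, mul_zero, zero_mul, Complex.exp_zero, if_pos rfl]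
    rw [intervalIntegral.integral_const]
    rw [sub_neg_eq_add, Complex.real_smul]
    push_cast
    ring
  · rw [if_neg h]
    have hc : (Complex.I * (n : ℂ)) ≠ 0 :=
      mul_ne_zero Complex.I_ne_zero (Int.cast_ne_zero.mpr h)
    have key := integral_exp_mul_complex (a := -Real.pi) (b := Real.pi) hc
    simp only [mul_assoc] at key ⊢
    rw [key]
    have h1 : Complex.exp (Complex.I * ((n : ℂ) * (Real.pi : ℂ))) = (-1 : ℂ) ^ n := by
      rw [show Complex.I * ((n : ℂ) * (Real.pi : ℂ))
            = (n : ℂ) * ((Real.pi : ℂ) * Complex.I) by ring,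
        Complex.exp_int_mul, Complex.exp_pi_mul_I]
    have h2 : Complex.exp (Complex.I * ((n : ℂ) * (((-Real.pi : ℝ)) : ℂ))) = (-1 : ℂ) ^ n := by
      rw [show Complex.I * ((n : ℂ) * (((-Real.pi : ℝ)) : ℂ))
            = ((-n : ℤ) : ℂ) * ((Real.pi : ℂ) * Complex.I) by push_cast; ring,
        Complex.exp_int_mul, Complex.exp_pi_mul_I, _root_.zpow_neg, ← _root_.inv_zpow, inv_neg_one]
    rw [h1, h2, sub_self, zero_div]

private lemma conj_mul_sum_exp {L : ℕ} (x : Fin L → ℂ) (ω : ℝ) :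
    (starRingEnd ℂ) (∑ k, x k * Complex.exp (Complex.I * ((k : ℤ) : ℂ) * ω)) *
      (∑ k, x k * Complex.exp (Complex.I * ((k : ℤ) : ℂ) * ω)) =
    ∑ j, ∑ k, ((starRingEnd ℂ) (x j) * x k) *
      Complex.exp (Complex.I * ((((k : ℤ) - (j : ℤ)) : ℤ) : ℂ) * ω) := by
  rw [map_sum, Finset.sum_mul_sum]
  refine Finset.sum_congr rfl fun j _ => Finset.sum_congr rfl fun k _ => ?_
  rw [_root_.map_mul, ← Complex.exp_conj]
  simp only [_root_.map_mul, Complex.conj_I, Complex.conj_ofReal, map_intCast]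
  rw [mul_mul_mul_comm, ← Complex.exp_add]
  congr 1
  push_cast
  ring

private lemma exp_integrable (c : ℤ) (g : ℝ → ℝ) (hg : Continuous g) :
    IntervalIntegrable (fun ω : ℝ => (g ω : ℂ) * Complex.exp (Complex.I * (c : ℂ) * ω))
      MeasureTheory.volume (-Real.pi) Real.pi := by
  apply Continuous.intervalIntegrable
  fun_prop

private lemma quadform (f : ℝ → ℝ) (hfcont : Continuous f) (b : ℤ → ℂ)
    (hb : ∀ i : ℤ, b i = (1 / (2 * Real.pi)) •
      ∫ ω in (-Real.pi)..Real.pi, (f ω : ℂ) * Complex.exp (Complex.I * i * ω))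
    (L : ℕ) (x : Fin L → ℂ) :
    star x ⬝ᵥ (toeplitz L b) *ᵥ x = (1 / (2 * Real.pi) : ℝ) •
      ∫ ω in (-Real.pi)..Real.pi, (f ω : ℂ) *
        ((starRingEnd ℂ) (∑ k, x k * Complex.exp (Complex.I * ((k : ℤ) : ℂ) * ω)) *
          (∑ k, x k * Complex.exp (Complex.I * ((k : ℤ) : ℂ) * ω))) := by
  have hint : ∀ (j k : Fin L), IntervalIntegrable
      (fun ω : ℝ => ((starRingEnd ℂ) (x j) * x k) *
        ((f ω : ℂ) * Complex.exp (Complex.I * ((((k : ℤ) - (j : ℤ)) : ℤ) : ℂ) * ω)))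
      MeasureTheory.volume (-Real.pi) Real.pi := by
    intro j k
    exact (exp_integrable _ f hfcont).const_mul _
  calc star x ⬝ᵥ (toeplitz L b) *ᵥ x
      = ∑ j, ∑ k, (starRingEnd ℂ) (x j) * x k * b ((k : ℤ) - (j : ℤ)) := by
        simp only [dotProduct, Matrix.mulVec, toeplitz, Pi.star_apply,
          RCLike.star_def, Finset.mul_sum, dotProduct]
        exact Finset.sum_congr rfl fun j _ => Finset.sum_congr rfl fun k _ => by ring
    _ = ∑ j, ∑ k, (1 / (2 * Real.pi) : ℝ) • ∫ ω in (-Real.pi)..Real.pi,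
          ((starRingEnd ℂ) (x j) * x k) *
            ((f ω : ℂ) * Complex.exp (Complex.I * ((((k : ℤ) - (j : ℤ)) : ℤ) : ℂ) * ω)) := by
        refine Finset.sum_congr rfl fun j _ => Finset.sum_congr rfl fun k _ => ?_
        rw [hb, mul_smul_comm, ← intervalIntegral.integral_const_mul]
    _ = (1 / (2 * Real.pi) : ℝ) • ∑ j, ∑ k, ∫ ω in (-Real.pi)..Real.pi,
          ((starRingEnd ℂ) (x j) * x k) *
            ((f ω : ℂ) * Complex.exp (Complex.I * ((((k : ℤ) - (j : ℤ)) : ℤ) : ℂ) * ω)) := by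
        rw [Finset.smul_sum]
        exact Finset.sum_congr rfl fun j _ => (Finset.smul_sum).symm
    _ = (1 / (2 * Real.pi) : ℝ) • ∫ ω in (-Real.pi)..Real.pi, ∑ j, ∑ k,
          ((starRingEnd ℂ) (x j) * x k) *
            ((f ω : ℂ) * Complex.exp (Complex.I * ((((k : ℤ) - (j : ℤ)) : ℤ) : ℂ) * ω)) := by
        congr 1
        have inner : ∀ j : Fin L,
            (∑ k, ∫ ω in (-Real.pi)..Real.pi, ((starRingEnd ℂ) (x j) * x k) *
              ((f ω : ℂ) * Complex.exp (Complex.I * ((((k : ℤ) - (j : ℤ)) : ℤ) : ℂ) * ω)))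
            = ∫ ω in (-Real.pi)..Real.pi, ∑ k, ((starRingEnd ℂ) (x j) * x k) *
              ((f ω : ℂ) * Complex.exp (Complex.I * ((((k : ℤ) - (j : ℤ)) : ℤ) : ℂ) * ω)) :=
          fun j => (intervalIntegral.integral_finset_sum (fun k _ => hint j k)).symm
        rw [Finset.sum_congr rfl (fun j _ => inner j)]
        exact (intervalIntegral.integral_finset_sum (fun j _ => by
          apply Continuous.intervalIntegrable
          exact continuous_finset_sum _ (fun k _ => by fun_prop))).symm
    _ = _ := by
        congr 1
        refine intervalIntegral.integral_congr fun ω _ => ?_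
        rw [conj_mul_sum_exp, Finset.mul_sum]
        refine Finset.sum_congr rfl fun j _ => ?_
        rw [Finset.mul_sum]
        exact Finset.sum_congr rfl fun k _ => by ring

private lemma integral_normSq (L : ℕ) (x : Fin L → ℂ) :
    (∫ ω in (-Real.pi)..Real.pi,
      Complex.normSq (∑ k, x k * Complex.exp (Complex.I * ((k : ℤ) : ℂ) * ω)))
    = 2 * Real.pi * ∑ k, Complex.normSq (x k) := by
  have hC : (∫ ω in (-Real.pi)..Real.pi,
      ((Complex.normSq (∑ k, x k * Complex.exp (Complex.I * ((k : ℤ) : ℂ) * ω)) : ℝ) : ℂ))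
      = ((2 * Real.pi * ∑ k, Complex.normSq (x k) : ℝ) : ℂ) := by
    have hpt : ∀ ω : ℝ,
        ((Complex.normSq (∑ k, x k * Complex.exp (Complex.I * ((k : ℤ) : ℂ) * ω)) : ℝ) : ℂ)
        = ∑ j, ∑ k, ((starRingEnd ℂ) (x j) * x k) *
            Complex.exp (Complex.I * ((((k : ℤ) - (j : ℤ)) : ℤ) : ℂ) * ω) := by
      intro ω
      rw [← conj_mul_sum_exp, ← Complex.normSq_eq_conj_mul_self]
    rw [intervalIntegral.integral_congr (fun ω _ => hpt ω)]
    rw [intervalIntegral.integral_finset_sum (fun j _ => by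
      apply Continuous.intervalIntegrable
      exact continuous_finset_sum _ (fun k _ => by fun_prop))]
    have hrow : ∀ j : Fin L, (∫ ω in (-Real.pi)..Real.pi, ∑ k,
          ((starRingEnd ℂ) (x j) * x k) *
            Complex.exp (Complex.I * ((((k : ℤ) - (j : ℤ)) : ℤ) : ℂ) * ω))
        = (starRingEnd ℂ) (x j) * x j * (2 * Real.pi : ℂ) := by
      intro j
      rw [intervalIntegral.integral_finset_sum (fun k _ => by
        apply Continuous.intervalIntegrable; fun_prop)]
      have h1 : ∀ k : Fin L, (∫ ω in (-Real.pi)..Real.pi,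
            ((starRingEnd ℂ) (x j) * x k) *
              Complex.exp (Complex.I * ((((k : ℤ) - (j : ℤ)) : ℤ) : ℂ) * ω))
          = if k = j then ((starRingEnd ℂ) (x j) * x k) * (2 * Real.pi : ℂ) else 0 := by
        intro k
        rw [intervalIntegral.integral_const_mul, orth_exp]
        by_cases h : k = j
        · subst h; simp
        · rw [if_neg h, if_neg, mul_zero]
          rw [sub_eq_zero]
          exact fun hh => h (Fin.ext (by exact_mod_cast hh))
      rw [Finset.sum_congr rfl (fun k _ => h1 k),
        Finset.sum_ite_eq' Finset.univ j, if_pos (Finset.mem_univ j)]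
    rw [Finset.sum_congr rfl (fun j _ => hrow j)]
    push_cast
    simp only [Complex.normSq_eq_conj_mul_self]
    rw [← Finset.sum_mul, mul_comm]
  apply Complex.ofReal_injective
  rw [← intervalIntegral.integral_ofReal]
  exact hC


/-- The Toeplitz matrix built from the Fourier coefficients of a
continuous, `2π`-periodic, strictly positive function is Hermitian positive
definite, in particular invertible. -/
theorem toeplitz_posdef_of_positive_symbol
    (f : ℝ → ℝ) (hfcont : Continuous f)
    (hfper : Function.Periodic f (2 * Real.pi))
    (hfpos : ∀ ω : ℝ, 0 < f ω)
    (b : ℤ → ℂ)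
    (hb : ∀ i : ℤ, b i = (1 / (2 * Real.pi)) •
      ∫ ω in (-Real.pi)..Real.pi, (f ω : ℂ) * Complex.exp (Complex.I * i * ω))
    (L : ℕ) (hL : 1 ≤ L) :
    (toeplitz L b).IsHermitian ∧ (toeplitz L b).PosDef ∧ IsUnit (toeplitz L b) := by
  have hconjint : ∀ (h : ℝ → ℂ), (starRingEnd ℂ) (∫ ω in (-Real.pi)..Real.pi, h ω)
      = ∫ ω in (-Real.pi)..Real.pi, (starRingEnd ℂ) (h ω) := by
    intro h
    simp only [intervalIntegral, ← integral_conj, map_sub]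
  have hbconj : ∀ i : ℤ, (starRingEnd ℂ) (b i) = b (-i) := by
    intro i
    rw [hb i, hb (-i), Complex.real_smul, Complex.real_smul, _root_.map_mul,
      Complex.conj_ofReal, hconjint]
    congr 1
    refine intervalIntegral.integral_congr fun ω _ => ?_
    rw [_root_.map_mul, Complex.conj_ofReal, ← Complex.exp_conj]
    congr 2
    simp only [_root_.map_mul, Complex.conj_I, Complex.conj_ofReal, map_intCast]
    push_cast
    ring
  have herm : (toeplitz L b).IsHermitian := by
    show (toeplitz L b)ᴴ = toeplitz L b
    ext i j
    simp only [Matrix.conjTranspose_apply, toeplitz, RCLike.star_def]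
    rw [hbconj]
    congr 1
    ring
  have posdef : (toeplitz L b).PosDef := by
    refine Matrix.posDef_iff_dotProduct_mulVec.mpr ⟨herm, fun x hx => ?_⟩
    rw [quadform f hfcont b hb L x]
    set G : ℝ → ℂ := fun ω => ∑ k, x k * Complex.exp (Complex.I * ((k : ℤ) : ℂ) * ω) with hGdef
    have hGcont : Continuous G := continuous_finset_sum _ (fun k _ => by fun_prop)
    have hpt : ∀ ω : ℝ, (f ω : ℂ) * ((starRingEnd ℂ) (G ω) * G ω)
        = ((f ω * Complex.normSq (G ω) : ℝ) : ℂ) := by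
      intro ω
      rw [← Complex.normSq_eq_conj_mul_self]
      push_cast
      ring
    rw [intervalIntegral.integral_congr (fun ω _ => hpt ω), intervalIntegral.integral_ofReal,
      Complex.real_smul, ← Complex.ofReal_mul, Complex.zero_lt_real]
    obtain ⟨ω₀, hω₀mem, hmin⟩ := isCompact_Icc.exists_isMinOn
      (Set.nonempty_Icc.mpr (by linarith [Real.pi_pos] : (-Real.pi) ≤ Real.pi)) hfcont.continuousOn
    obtain ⟨k₀, hk₀⟩ := Function.ne_iff.mp hx
    have hsum : 0 < ∑ k, Complex.normSq (x k) :=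
      Finset.sum_pos' (fun k _ => Complex.normSq_nonneg _)
        ⟨k₀, Finset.mem_univ _, Complex.normSq_pos.mpr hk₀⟩
    have cont2 : Continuous fun ω => f ω * Complex.normSq (G ω) :=
      hfcont.mul (Complex.continuous_normSq.comp hGcont)
    have hlow : f ω₀ * (2 * Real.pi * ∑ k, Complex.normSq (x k)) ≤
        ∫ ω in (-Real.pi)..Real.pi, f ω * Complex.normSq (G ω) := by
      have hmono := intervalIntegral.integral_mono_on
        (by linarith [Real.pi_pos] : -Real.pi ≤ Real.pi)
        (Continuous.intervalIntegrable (μ := MeasureTheory.volume)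
          (continuous_const.mul (Complex.continuous_normSq.comp hGcont)) _ _)
        (cont2.intervalIntegrable (μ := MeasureTheory.volume) _ _)
        (fun ω hω => mul_le_mul_of_nonneg_right (hmin hω) (Complex.normSq_nonneg _))
      calc f ω₀ * (2 * Real.pi * ∑ k, Complex.normSq (x k))
          = ∫ ω in (-Real.pi)..Real.pi, f ω₀ * Complex.normSq (G ω) := by
            rw [intervalIntegral.integral_const_mul, integral_normSq]
        _ ≤ _ := hmono
    have hRpos : 0 < ∫ ω in (-Real.pi)..Real.pi, f ω * Complex.normSq (G ω) :=
      lt_of_lt_of_le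
        (by have := hfpos ω₀; have := Real.pi_pos; positivity) hlow
    have h2pi : 0 < 1 / (2 * Real.pi) := by positivity
    exact mul_pos h2pi hRpos
  exact ⟨herm, posdef, posdef.isUnit⟩
end
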